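/- Let p > 3 be a prime. Let A be an 𝔽_p-brace whose additive group is a 4-dimensional 𝔽_p-vector space with basis P, Q, R, S, and suppose P, Q, R, S satisfy the Multiplicative Table with parameters y, i, k ∈ 𝔽_p, y ≠ 0. Then P, Q, R, S satisfy the relations Q∘S = S∘Q∘P, Q∘R = R∘Q, P∘S = S∘P, P∘Q = Q∘P, P∘R = R∘P, R∘S = S∘R∘Q, and P^p = Q^p = R^p = S^p = 0 (powers with respect to ∘), and P, Q, R, S generate the group (A,∘), which has p^4 elements; hence (A,∘) is the group XV. -/

import Mathlib

/-- A left brace: `(A, +)` an abelian group, `(A, *)` a group (we write the brace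
multiplication `∘` as `*`), with `a * (b + c) + a = a * b + a * c`. -/
class LeftBrace (A : Type*) extends Group A, AddCommGroup A where
  mul_add_eq : ∀ a b c : A, a * (b + c) + a = a * b + a * c

namespace LeftBrace

/-- The star operation `a * b = a∘b - a - b` of a left brace. -/
def star {A : Type*} [LeftBrace A] (a b : A) : A := a * b - a - b

end LeftBrace

/-- An `𝔽ₚ`-brace: a left brace whose additive group is a `ZMod p`-vector space
with `a * (α • b) = α • (a * b)`. -/
class FpBrace (p : ℕ) (A : Type*) extends LeftBrace A, Module (ZMod p) A where
  star_smul' : ∀ (α : ZMod p) (a b : A),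
    LeftBrace.star a (α • b) = α • LeftBrace.star a b

/-- The left chain `A^1 = A`, `A^{i+1} = A * A^i` (additive subgroup generated by
`a * b`, `a ∈ A`, `b ∈ A^i`). -/
def lpow (A : Type*) [LeftBrace A] : ℕ → AddSubgroup A
  | 0 => ⊤
  | 1 => ⊤
  | (n+2) => AddSubgroup.closure
      {x : A | ∃ a : A, ∃ b ∈ lpow A (n+1), x = LeftBrace.star a b}

/-- The right chain `A^{(1)} = A`, `A^{(i+1)} = A^{(i)} * A`. -/
def rpow (A : Type*) [LeftBrace A] : ℕ → AddSubgroup A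
  | 0 => ⊤
  | 1 => ⊤
  | (n+2) => AddSubgroup.closure
      {x : A | ∃ a ∈ rpow A (n+1), ∃ b : A, x = LeftBrace.star a b}

/-- A left brace is right nilpotent if `A^{(n)} = 0` for some `n`. -/
def IsRightNilpotent (A : Type*) [LeftBrace A] : Prop := ∃ n, rpow A n = ⊥

/-- The defining relations of the group XV on generators `P, Q, R, S`. -/
def XVRelations {A : Type*} [LeftBrace A] (p : ℕ) (P Q R S : A) : Prop :=
  Q * S = S * Q * P ∧ Q * R = R * Q ∧ P * S = S * P ∧ P * Q = Q * P ∧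
  P * R = R * P ∧ R * S = S * R * Q ∧
  P ^ p = 1 ∧ Q ^ p = 1 ∧ R ^ p = 1 ∧ S ^ p = 1

/-- The multiplicative group of the brace `A` is the group XV, with generators
`P, Q, R, S` satisfying the XV relations. -/
def IsXVBrace (p : ℕ) (A : Type*) [LeftBrace A] (P Q R S : A) : Prop :=
  Nat.card A = p ^ 4 ∧ Subgroup.closure {P, Q, R, S} = ⊤ ∧ XVRelations p P Q R S


/-- The Multiplicative Table with parameters `y, i, k`. -/
def MultTable {p : ℕ} {A : Type*} [LeftBrace A] [Module (ZMod p) A]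
    (P Q R S : A) (y i k : ZMod p) : Prop :=
  LeftBrace.star P P = 0 ∧ LeftBrace.star P Q = 0 ∧
  LeftBrace.star P R = y • S ∧ LeftBrace.star P S = 0 ∧
  LeftBrace.star Q P = 0 ∧ LeftBrace.star Q Q = -(y • S) ∧
  LeftBrace.star Q R = ((2 : ZMod p)⁻¹ * y) • S ∧ LeftBrace.star Q S = 0 ∧
  LeftBrace.star R P = y • S ∧ LeftBrace.star R Q = ((2 : ZMod p)⁻¹ * y) • S ∧
  LeftBrace.star R R = i • P + k • S ∧ LeftBrace.star R S = 0 ∧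
  LeftBrace.star S P = 0 ∧ LeftBrace.star S Q = -P ∧
  LeftBrace.star S R = -Q + P - ((2 : ZMod p)⁻¹ * y) • S ∧ LeftBrace.star S S = 0

/-- Additive subgroup generated by all `x * y`, `x ∈ X`, `y ∈ Y`. -/
def starSpan {A : Type*} [LeftBrace A] (X Y : AddSubgroup A) : AddSubgroup A :=
  AddSubgroup.closure {z : A | ∃ x ∈ X, ∃ y ∈ Y, z = LeftBrace.star x y}

/-- An ideal of a left brace: an additive subgroup closed under all `λ_a` and
normal in `(A, ∘)`. -/
def IsBraceIdeal {A : Type*} [LeftBrace A] (I : AddSubgroup A) : Prop :=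
  (∀ a : A, ∀ b ∈ I, a * b - a ∈ I) ∧ (∀ a : A, ∀ b ∈ I, a * b * a⁻¹ ∈ I)

/-- A brace is prime if the product of any two nonzero ideals is nonzero. -/
def IsPrimeBrace (A : Type*) [LeftBrace A] : Prop :=
  ∀ I J : AddSubgroup A, IsBraceIdeal I → IsBraceIdeal J → I ≠ ⊥ → J ≠ ⊥ →
    starSpan I J ≠ ⊥

/-- Left chain of a nonassociative algebra given by a bilinear map. -/
def preLieL (R : Type*) [CommRing R] (V : Type*) [AddCommGroup V] [Module R V]
    (mul : V →ₗ[R] V →ₗ[R] V) : ℕ → Submodule R V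
  | 0 => ⊤
  | 1 => ⊤
  | (n+2) => Submodule.span R
      {x : V | ∃ a : V, ∃ b ∈ preLieL R V mul (n+1), x = mul a b}

/-- Right chain of a nonassociative algebra given by a bilinear map. -/
def preLieR (R : Type*) [CommRing R] (V : Type*) [AddCommGroup V] [Module R V]
    (mul : V →ₗ[R] V →ₗ[R] V) : ℕ → Submodule R V
  | 0 => ⊤
  | 1 => ⊤
  | (n+2) => Submodule.span R
      {x : V | ∃ a ∈ preLieR R V mul (n+1), ∃ b : V, x = mul a b}

/-- The defining relations of the group XIV on generators `P, Q, R, S`. -/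
def XIVRelations {A : Type*} [LeftBrace A] (p : ℕ) (P Q R S : A) : Prop :=
  Q * P = P * Q ∧ Q * R = R * Q ∧ Q * S = S * Q ∧
  P * R = R * P ∧ P * S = S * P ∧ R * S = S * R * P ∧
  P ^ p = 1 ∧ Q ^ p = 1 ∧ R ^ p = 1 ∧ S ^ p = 1

section BraceAux
open LeftBrace
variable {A : Type*} [LeftBrace A]

lemma lb_zero_eq_one : (0 : A) = 1 := by
  have h := LeftBrace.mul_add_eq (1 : A) 0 0
  simp only [add_zero, one_mul, zero_add] at h
  exact h.symm

lemma lb_mul_add (a b c : A) : a * (b + c) = a * b + a * c - a :=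
  eq_sub_of_add_eq (LeftBrace.mul_add_eq a b c)

lemma mul_eq_star (a b : A) : a * b = star a b + a + b := by
  simp only [LeftBrace.star]; abel

lemma star_zero_right (a : A) : star a 0 = 0 := by
  have h : a * (0 : A) = a := by rw [lb_zero_eq_one, mul_one]
  simp only [LeftBrace.star, h]; abel

lemma star_add_right (a b c : A) : star a (b + c) = star a b + star a c := by
  simp only [LeftBrace.star, lb_mul_add]; abel

lemma star_neg_right (a b : A) : star a (-b) = - star a b := by
  have h := star_add_right a b (-b)
  rw [add_neg_cancel, star_zero_right] at h
  exact (neg_eq_of_add_eq_zero_right h.symm).symm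

lemma star_sub_right (a b c : A) : star a (b - c) = star a b - star a c := by
  rw [sub_eq_add_neg, star_add_right, star_neg_right, sub_eq_add_neg]

lemma star_one_left (b : A) : star (1 : A) b = 0 := by
  simp only [LeftBrace.star, one_mul]
  rw [← lb_zero_eq_one]; abel

lemma star_mul_left (a b c : A) : star (a * b) c = star a c + star b c + star a (star b c) := by
  have h4 : a * b * c = a * (star b c + (b + c)) := by
    rw [mul_assoc]; congr 1; simp only [LeftBrace.star]; abel
  simp only [LeftBrace.star] at h4 ⊢
  rw [h4, lb_mul_add, lb_mul_add]
  abel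

end BraceAux

section FpAux
open LeftBrace
variable {p : ℕ} {A : Type*} [FpBrace p A]

lemma star_smul_right (α : ZMod p) (a b : A) : star a (α • b) = α • star a b :=
  FpBrace.star_smul' α a b

end FpAux

/-- an `𝔽ₚ`-brace with basis `P, Q, R, S` satisfying the Multiplicative
Table has multiplicative group XV, generated by `P, Q, R, S`. -/
theorem statement13 (p : ℕ) (hp : p.Prime) (hp3 : 3 < p) (A : Type*) [FpBrace p A]
    (P Q R S : A) (B : Module.Basis (Fin 4) (ZMod p) A)
    (hB : B 0 = P ∧ B 1 = Q ∧ B 2 = R ∧ B 3 = S)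
    (y i k : ZMod p) (hy : y ≠ 0) (htable : MultTable P Q R S y i k) :
    XVRelations p P Q R S ∧ Subgroup.closure {P, Q, R, S} = ⊤ ∧
    Nat.card A = p ^ 4 := by

  classical
  haveI : Fact p.Prime := ⟨hp⟩
  haveI : NeZero p := ⟨hp.pos.ne'⟩
  obtain ⟨tPP, tPQ, tPR, tPS, tQP, tQQ, tQR, tQS, tRP, tRQ, tRR, tRS,
    tSP, tSQ, tSR, tSS⟩ := htable
  -- power formulas
  have powP : ∀ n : ℕ, P ^ n = (n : ZMod p) • P := by
    intro n
    induction n with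
    | zero => rw [pow_zero, ← lb_zero_eq_one, Nat.cast_zero, zero_smul]
    | succ n ih =>
      rw [pow_succ', mul_eq_star, ih, star_smul_right, tPP, smul_zero]
      push_cast
      module
  have powS : ∀ n : ℕ, S ^ n = (n : ZMod p) • S := by
    intro n
    induction n with
    | zero => rw [pow_zero, ← lb_zero_eq_one, Nat.cast_zero, zero_smul]
    | succ n ih =>
      rw [pow_succ', mul_eq_star, ih, star_smul_right, tSS, smul_zero]
      push_cast
      module
  have powQ : ∀ n : ℕ, Q ^ n = (n : ZMod p) • Q - ((n.choose 2 : ZMod p) * y) • S := by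
    intro n
    induction n with
    | zero => rw [pow_zero, ← lb_zero_eq_one]; simp
    | succ n ih =>
      have hc : (n+1).choose 2 = n.choose 1 + n.choose 2 := Nat.choose_succ_succ n 1
      rw [pow_succ', mul_eq_star, ih, star_sub_right, star_smul_right, star_smul_right,
        tQQ, tQS, smul_zero, hc, Nat.choose_one_right]
      push_cast
      module
  have powR : ∀ n : ℕ, R ^ n = (n : ZMod p) • R + ((n.choose 2 : ZMod p) * i) • P
      + ((n.choose 2 : ZMod p) * k + (n.choose 3 : ZMod p) * (y * i)) • S := by
    intro n
    induction n with
    | zero => rw [pow_zero, ← lb_zero_eq_one]; simp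
    | succ n ih =>
      have hc2 : (n+1).choose 2 = n.choose 1 + n.choose 2 := Nat.choose_succ_succ n 1
      have hc3 : (n+1).choose 3 = n.choose 2 + n.choose 3 := Nat.choose_succ_succ n 2
      rw [pow_succ', mul_eq_star, ih, star_add_right, star_add_right, star_smul_right,
        star_smul_right, star_smul_right, tRR, tRP, tRS, smul_zero, hc2, hc3,
        Nat.choose_one_right]
      push_cast
      module
  -- relations
  have rel1 : Q * S = S * Q * P := by
    rw [mul_eq_star Q S, tQS, mul_eq_star (S*Q) P, star_mul_left, tSP, tQP,
      star_zero_right, mul_eq_star S Q, tSQ]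
    abel
  have rel2 : Q * R = R * Q := by
    rw [mul_eq_star Q R, mul_eq_star R Q, tQR, tRQ]; abel
  have rel3 : P * S = S * P := by
    rw [mul_eq_star P S, mul_eq_star S P, tPS, tSP]; abel
  have rel4 : P * Q = Q * P := by
    rw [mul_eq_star P Q, mul_eq_star Q P, tPQ, tQP]; abel
  have rel5 : P * R = R * P := by
    rw [mul_eq_star P R, mul_eq_star R P, tPR, tRP]; abel
  have rel6 : R * S = S * R * Q := by
    rw [mul_eq_star R S, tRS, mul_eq_star (S*R) Q, star_mul_left, tSQ, tRQ,
      star_smul_right, tSS, smul_zero, mul_eq_star S R, tSR]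
    abel
  have hd2 : (Nat.choose p 2 : ZMod p) = 0 :=
    (ZMod.natCast_eq_zero_iff _ _).mpr (hp.dvd_choose_self (by norm_num) (by omega))
  have hd3 : (Nat.choose p 3 : ZMod p) = 0 :=
    (ZMod.natCast_eq_zero_iff _ _).mpr (hp.dvd_choose_self (by norm_num) (by omega))
  have relPp : P ^ p = 1 := by
    rw [powP p, ZMod.natCast_self, zero_smul, lb_zero_eq_one]
  have relSp : S ^ p = 1 := by
    rw [powS p, ZMod.natCast_self, zero_smul, lb_zero_eq_one]
  have relQp : Q ^ p = 1 := by
    rw [powQ p, ZMod.natCast_self, hd2, ← lb_zero_eq_one]; simp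
  have relRp : R ^ p = 1 := by
    rw [powR p, ZMod.natCast_self, hd2, hd3, ← lb_zero_eq_one]; simp
  -- generation
  have hPH : P ∈ Subgroup.closure ({P, Q, R, S} : Set A) := Subgroup.subset_closure (by simp)
  have hQH : Q ∈ Subgroup.closure ({P, Q, R, S} : Set A) := Subgroup.subset_closure (by simp)
  have hRH : R ∈ Subgroup.closure ({P, Q, R, S} : Set A) := Subgroup.subset_closure (by simp)
  have hSH : S ∈ Subgroup.closure ({P, Q, R, S} : Set A) := Subgroup.subset_closure (by simp)
  have key : ∀ x ∈ Subgroup.closure ({P, Q, R, S} : Set A),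
      LeftBrace.star x S = 0 ∧ (∃ c : ZMod p, LeftBrace.star x P = c • S) ∧
      (∃ d e : ZMod p, LeftBrace.star x Q = d • P + e • S) := by
    intro x hx
    induction hx using Subgroup.closure_induction with
    | mem z hz =>
      simp only [Set.mem_insert_iff, Set.mem_singleton_iff] at hz
      rcases hz with rfl | rfl | rfl | rfl
      · exact ⟨tPS, ⟨0, by rw [tPP, zero_smul]⟩, ⟨0, 0, by rw [tPQ]; module⟩⟩
      · exact ⟨tQS, ⟨0, by rw [tQP, zero_smul]⟩, ⟨0, -y, by rw [tQQ]; module⟩⟩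
      · exact ⟨tRS, ⟨y, tRP⟩, ⟨0, (2 : ZMod p)⁻¹ * y, by rw [tRQ]; module⟩⟩
      · exact ⟨tSS, ⟨0, by rw [tSP, zero_smul]⟩, ⟨-1, 0, by rw [tSQ]; module⟩⟩
    | one =>
      exact ⟨star_one_left S, ⟨0, by rw [star_one_left, zero_smul]⟩,
        ⟨0, 0, by rw [star_one_left]; module⟩⟩
    | mul u v hu hv ihu ihv =>
      obtain ⟨huS, ⟨cu, huP⟩, ⟨du, eu, huQ⟩⟩ := ihu
      obtain ⟨hvS, ⟨cv, hvP⟩, ⟨dv, ev, hvQ⟩⟩ := ihv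
      refine ⟨?_, ⟨cu + cv, ?_⟩, ⟨du + dv, eu + ev + dv * cu, ?_⟩⟩
      · rw [star_mul_left, huS, hvS, star_zero_right]; simp
      · rw [star_mul_left, huP, hvP, star_smul_right, huS, smul_zero]; module
      · rw [star_mul_left, huQ, hvQ, star_add_right, star_smul_right, star_smul_right,
          huP, huS, smul_zero]
        module
    | inv u hu ihu =>
      obtain ⟨huS, ⟨c, huP⟩, ⟨d, e, huQ⟩⟩ := ihu
      have hS' : LeftBrace.star u⁻¹ S = 0 := by
        have h1 : LeftBrace.star (u⁻¹ * u) S = 0 := by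
          rw [inv_mul_cancel]; exact star_one_left S
        rw [star_mul_left, huS, star_zero_right] at h1
        simpa using h1
      have hP' : LeftBrace.star u⁻¹ P = (-c) • S := by
        have h1 : LeftBrace.star (u⁻¹ * u) P = 0 := by
          rw [inv_mul_cancel]; exact star_one_left P
        rw [star_mul_left, huP, star_smul_right, hS', smul_zero, add_zero] at h1
        have h2 := eq_neg_of_add_eq_zero_left h1
        rw [h2, neg_smul]
      have hQ' : LeftBrace.star u⁻¹ Q = (-d) • P + (d * c - e) • S := by
        have h1 : LeftBrace.star (u⁻¹ * u) Q = 0 := by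
          rw [inv_mul_cancel]; exact star_one_left Q
        rw [star_mul_left, huQ, star_add_right, star_smul_right, star_smul_right,
          hP', hS', smul_zero, add_zero] at h1
        have h2 : LeftBrace.star u⁻¹ Q + ((d • P + e • S) + d • ((-c) • S)) = 0 := by
          rw [← add_assoc]; exact h1
        rw [eq_neg_of_add_eq_zero_left h2]
        module
      exact ⟨hS', ⟨-c, hP'⟩, ⟨-d, d * c - e, hQ'⟩⟩
  have addS : ∀ x ∈ Subgroup.closure ({P, Q, R, S} : Set A), ∀ δ : ZMod p,
      x + δ • S ∈ Subgroup.closure ({P, Q, R, S} : Set A) := by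
    intro x hx δ
    have h1 := mul_mem hx (pow_mem hSH δ.val)
    have h2 : x * S ^ δ.val = x + δ • S := by
      rw [mul_eq_star, powS, ZMod.natCast_zmod_val, star_smul_right, (key x hx).1, smul_zero]
      abel
    rwa [h2] at h1
  have addP : ∀ x ∈ Subgroup.closure ({P, Q, R, S} : Set A), ∀ α : ZMod p,
      x + α • P ∈ Subgroup.closure ({P, Q, R, S} : Set A) := by
    intro x hx α
    obtain ⟨hxS, ⟨c, hxP⟩, -⟩ := key x hx
    have h1 := mul_mem hx (pow_mem hPH α.val)
    have h2 : x * P ^ α.val = x + α • P + (α * c) • S := by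
      rw [mul_eq_star, powP, ZMod.natCast_zmod_val, star_smul_right, hxP]
      module
    rw [h2] at h1
    have h3 := addS _ h1 (-(α * c))
    have h4 : x + α • P + (α * c) • S + (-(α * c)) • S = x + α • P := by module
    rwa [h4] at h3
  have hgen : Subgroup.closure ({P, Q, R, S} : Set A) = ⊤ := by
    rw [Subgroup.eq_top_iff']
    intro v
    have hv : v = B.repr v 0 • P + B.repr v 1 • Q + B.repr v 2 • R + B.repr v 3 • S := by
      have h := B.sum_repr v
      rw [Fin.sum_univ_four, hB.1, hB.2.1, hB.2.2.1, hB.2.2.2] at h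
      exact h.symm
    obtain ⟨r0, r1, r2, r3, hv⟩ :
        ∃ r0 r1 r2 r3 : ZMod p, v = r0 • P + r1 • Q + r2 • R + r3 • S :=
      ⟨_, _, _, _, hv⟩
    obtain ⟨hwS, ⟨cw, hwP⟩, ⟨dw, ew, hwQ⟩⟩ := key _ (pow_mem hRH r2.val)
    have e1 : R ^ r2.val = r2 • R + (((r2.val.choose 2 : ℕ) : ZMod p) * i) • P
        + (((r2.val.choose 2 : ℕ) : ZMod p) * k
          + ((r2.val.choose 3 : ℕ) : ZMod p) * (y * i)) • S := by
      rw [powR, ZMod.natCast_zmod_val]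
    have e2 : Q ^ r1.val = r1 • Q - (((r1.val.choose 2 : ℕ) : ZMod p) * y) • S := by
      rw [powQ, ZMod.natCast_zmod_val]
    have e3 : LeftBrace.star (R ^ r2.val) (Q ^ r1.val)
        = r1 • (dw • P + ew • S) - (((r1.val.choose 2 : ℕ) : ZMod p) * y) • (0 : A) := by
      rw [e2, star_sub_right, star_smul_right, star_smul_right, hwQ, hwS]
    have hw2 : R ^ r2.val * Q ^ r1.val
        = r1 • Q + r2 • R + (((r2.val.choose 2 : ℕ) : ZMod p) * i + r1 * dw) • P
          + (((r2.val.choose 2 : ℕ) : ZMod p) * k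
            + ((r2.val.choose 3 : ℕ) : ZMod p) * (y * i)
            - ((r1.val.choose 2 : ℕ) : ZMod p) * y + r1 * ew) • S := by
      rw [mul_eq_star, e3, e1, e2]
      module
    have hwH := mul_mem (pow_mem hRH r2.val) (pow_mem hQH r1.val)
    rw [hw2] at hwH
    have h5 := addS _ (addP _ hwH
      (r0 - (((r2.val.choose 2 : ℕ) : ZMod p) * i + r1 * dw)))
      (r3 - (((r2.val.choose 2 : ℕ) : ZMod p) * k
        + ((r2.val.choose 3 : ℕ) : ZMod p) * (y * i)
        - ((r1.val.choose 2 : ℕ) : ZMod p) * y + r1 * ew))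
    have h6 : v = r1 • Q + r2 • R + (((r2.val.choose 2 : ℕ) : ZMod p) * i + r1 * dw) • P
        + (((r2.val.choose 2 : ℕ) : ZMod p) * k
          + ((r2.val.choose 3 : ℕ) : ZMod p) * (y * i)
          - ((r1.val.choose 2 : ℕ) : ZMod p) * y + r1 * ew) • S
        + (r0 - (((r2.val.choose 2 : ℕ) : ZMod p) * i + r1 * dw)) • P
        + (r3 - (((r2.val.choose 2 : ℕ) : ZMod p) * k
          + ((r2.val.choose 3 : ℕ) : ZMod p) * (y * i)
          - ((r1.val.choose 2 : ℕ) : ZMod p) * y + r1 * ew)) • S := by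
      rw [hv]; module
    rwa [← h6] at h5
  have hcard : Nat.card A = p ^ 4 := by
    rw [Nat.card_congr B.equivFun.toEquiv, Nat.card_fun, Nat.card_zmod,
      Nat.card_eq_fintype_card, Fintype.card_fin]
  exact ⟨⟨rel1, rel2, rel3, rel4, rel5, rel6, relPp, relQp, relRp, relSp⟩, hgen, hcard⟩
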